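/- Let C(λ) ∈ F[λ]^{kn×kn} be an extended block Kronecker pencil with body M(λ) ∈ F[λ]^{(q+1)n×(p+1)n}, k = p+q+1, and wing-pencil blocks K_1(λ), K_2(λ). If M(λ) satisfies the AS condition for P(λ) = Σ_{i=0}^k A_i λ^i, then C(λ) satisfies the AS condition for λ^{k-1} P(λ): AS(C,s) = 0 for s = 0,...,k−2 and AS(C,s) = A_{s−k+1} for s = k−1,...,2k−1. -/

import Mathlib

open Polynomial Matrix Kronecker

/-- The row vector `Λ_r(λ) = [λ^r, ..., λ, 1]`. -/
noncomputable def LamPoly (F : Type*) [Field F] (r : ℕ) :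
    Matrix (Fin 1) (Fin (r+1)) (Polynomial F) :=
  Matrix.of fun _ j => X ^ (r - (j : ℕ))

/-- The extended block Kronecker pencil `C(λ) = [[M(λ), K₂(λ)ᵀ],[K₁(λ), 0]]`. -/
noncomputable def extBlockKron {F : Type*} [Field F] {n p q : ℕ}
    (M : Matrix (Fin (q+1) × Fin n) (Fin (p+1) × Fin n) (Polynomial F))
    (K1 : Matrix (Fin p × Fin n) (Fin (p+1) × Fin n) (Polynomial F))
    (K2 : Matrix (Fin q × Fin n) (Fin (q+1) × Fin n) (Polynomial F)) :
    Matrix ((Fin (q+1) ⊕ Fin p) × Fin n) ((Fin (p+1) ⊕ Fin q) × Fin n) (Polynomial F) :=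
  Matrix.of fun rc cc =>
    match rc.1, cc.1 with
    | Sum.inl i, Sum.inl j => M (i, rc.2) (j, cc.2)
    | Sum.inl i, Sum.inr j => K2 (j, cc.2) (i, rc.2)
    | Sum.inr i, Sum.inl j => K1 (i, rc.2) (j, cc.2)
    | Sum.inr _, Sum.inr _ => 0


private lemma coeff_mul_Xpow_step {F : Type*} [Field F] (f : Polynomial F) (hf : f.natDegree ≤ 1)
    (P J m : ℕ) (hJ : J ≤ P) :
    (f * X ^ (P - J)).coeff m =
      (if J + m = P + 1 then f.coeff 1 else 0) + (if J + m = P then f.coeff 0 else 0) := by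
  rw [Polynomial.coeff_mul_X_pow']
  by_cases h : P - J ≤ m
  · rw [if_pos h]
    by_cases h1 : J + m = P + 1
    · have hmm : m - (P - J) = 1 := by omega
      rw [hmm, if_pos h1, if_neg (by omega), add_zero]
    · by_cases h2 : J + m = P
      · have hmm : m - (P - J) = 0 := by omega
        rw [hmm, if_neg h1, if_pos h2, zero_add]
      · have hlt : 1 < m - (P - J) := by omega
        rw [if_neg h1, if_neg h2,
          Polynomial.coeff_eq_zero_of_natDegree_lt (lt_of_le_of_lt hf hlt), add_zero]
  · rw [if_neg h, if_neg (by omega), if_neg (by omega), add_zero]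

private lemma wing_coeff {F : Type*} [Field F] {n P : ℕ} {rows : Type*}
    (K : Matrix (rows × Fin n) (Fin (P+1) × Fin n) (Polynomial F))
    (hd : ∀ r c, (K r c).natDegree ≤ 1)
    (hw : K * ((LamPoly F P)ᵀ ⊗ₖ (1 : Matrix (Fin n) (Fin n) (Polynomial F))) = 0)
    (r : rows) (a b : Fin n) (m : ℕ) :
    ∑ j : Fin (P+1),
      ((if (j : ℕ) + m = P + 1 then (K (r, a) (j, b)).coeff 1 else 0) +
       (if (j : ℕ) + m = P then (K (r, a) (j, b)).coeff 0 else 0)) = 0 := by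
  have h0 := congrFun (congrFun hw (r, a)) ((0 : Fin 1), b)
  rw [Matrix.mul_apply] at h0
  simp only [Matrix.zero_apply] at h0
  have hS : ∑ j : Fin (P+1), K (r, a) (j, b) * X ^ (P - (j : ℕ)) = 0 := by
    rw [← h0, Fintype.sum_prod_type]
    refine Finset.sum_congr rfl fun j _ => ?_
    simp [LamPoly, Matrix.one_apply, mul_ite, Finset.sum_ite_eq']
  have hm := congrArg (fun f => f.coeff m) hS
  simp only [Polynomial.finset_sum_coeff, Polynomial.coeff_zero] at hm
  calc ∑ j : Fin (P+1),
      ((if (j : ℕ) + m = P + 1 then (K (r, a) (j, b)).coeff 1 else 0) +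
       (if (j : ℕ) + m = P then (K (r, a) (j, b)).coeff 0 else 0))
      = ∑ j : Fin (P+1), (K (r, a) (j, b) * X ^ (P - (j : ℕ))).coeff m :=
        Finset.sum_congr rfl fun j _ =>
          (coeff_mul_Xpow_step _ (hd _ _) P j m (by omega)).symm
    _ = 0 := hm

/-- Position (0-indexed) of a block-row of `C(λ)` among its `k = p+q+1` block-rows. -/
def rowPos (p q : ℕ) : Fin (q+1) ⊕ Fin p → ℕ := Sum.elim (fun i => (i : ℕ)) (fun i => q + 1 + (i : ℕ))

/-- Position (0-indexed) of a block-column of `C(λ)` among its `k = p+q+1` block-columns. -/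
def colPos (p q : ℕ) : Fin (p+1) ⊕ Fin q → ℕ := Sum.elim (fun j => (j : ℕ)) (fun j => p + 1 + (j : ℕ))

/-- If the body `M(λ)` of an extended block Kronecker pencil `C(λ)` satisfies the AS
condition for `P(λ) = Σ_{i=0}^{k} A_i λ^i`, `k = p+q+1`, then `C(λ)`, viewed as a `k×k`
block pencil, satisfies the AS condition for `λ^{k-1} P(λ)`: `AS(C,s) = 0` for
`s = 0,…,k-2` and `AS(C,s) = A_{s-k+1}` for `s = k-1,…,2k-1`. -/
theorem extBlockKron_AS_shifted (F : Type*) [Field F] (n p q : ℕ)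
    (M : Matrix (Fin (q+1) × Fin n) (Fin (p+1) × Fin n) (Polynomial F))
    (K1 : Matrix (Fin p × Fin n) (Fin (p+1) × Fin n) (Polynomial F))
    (K2 : Matrix (Fin q × Fin n) (Fin (q+1) × Fin n) (Polynomial F))
    (hMpencil : ∀ r c, (M r c).natDegree ≤ 1)
    (hK1pencil : ∀ r c, (K1 r c).natDegree ≤ 1)
    (hK2pencil : ∀ r c, (K2 r c).natDegree ≤ 1)
    (hK1wing : K1 * ((LamPoly F p)ᵀ ⊗ₖ (1 : Matrix (Fin n) (Fin n) (Polynomial F))) = 0)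
    (hK2wing : K2 * ((LamPoly F q)ᵀ ⊗ₖ (1 : Matrix (Fin n) (Fin n) (Polynomial F))) = 0)
    (A : Fin (p+q+2) → Matrix (Fin n) (Fin n) F)
    (hAS : ∀ (s : Fin (p+q+2)) (a b : Fin n),
      (∑ i : Fin (q+1), ∑ j : Fin (p+1),
        ((if (i : ℕ) + (j : ℕ) + (s : ℕ) = p + q + 1 then (M (i, a) (j, b)).coeff 1 else 0) +
          (if (i : ℕ) + (j : ℕ) + (s : ℕ) + 1 = p + q + 1 then (M (i, a) (j, b)).coeff 0 else 0)))
        = A s a b) :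
    ∀ (s : ℕ) (hs : s < 2 * (p + q + 1)) (a b : Fin n),
      (∑ r : Fin (q+1) ⊕ Fin p, ∑ c : Fin (p+1) ⊕ Fin q,
        ((if rowPos p q r + colPos p q c + s + 1 = 2 * (p + q + 1) then
            (extBlockKron M K1 K2 (r, a) (c, b)).coeff 1 else 0) +
          (if rowPos p q r + colPos p q c + s + 2 = 2 * (p + q + 1) then
            (extBlockKron M K1 K2 (r, a) (c, b)).coeff 0 else 0)))
        = if h : p + q ≤ s then A ⟨s - (p + q), by omega⟩ a b else 0 := by
  intro s hs a b
  simp only [Fintype.sum_sum_type, Finset.sum_add_distrib]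
  simp only [extBlockKron, Matrix.of_apply, rowPos, colPos, Sum.elim_inl, Sum.elim_inr,
    Polynomial.coeff_zero, ite_self, Finset.sum_const_zero, add_zero]
  have hK1 : (∑ x : Fin p, ∑ y : Fin (p+1),
        if q + 1 + (x:ℕ) + (y:ℕ) + s + 1 = 2 * (p + q + 1) then (K1 (x, a) (y, b)).coeff 1 else 0)
      + (∑ x : Fin p, ∑ y : Fin (p+1),
        if q + 1 + (x:ℕ) + (y:ℕ) + s + 2 = 2 * (p + q + 1) then (K1 (x, a) (y, b)).coeff 0 else 0)
      = 0 := by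
    rw [← Finset.sum_add_distrib]
    refine Finset.sum_eq_zero fun i _ => ?_
    rw [← Finset.sum_add_distrib]
    by_cases hc : p + q ≤ s + (i:ℕ) + 1
    · refine Eq.trans (Finset.sum_congr rfl fun j _ => ?_)
        (wing_coeff K1 hK1pencil hK1wing i a b (s + (i:ℕ) + 1 - (p + q)))
      have hi := i.isLt; have hj := j.isLt
      congr 1
      · exact if_congr (by omega) rfl rfl
      · exact if_congr (by omega) rfl rfl
    · refine Finset.sum_eq_zero fun j _ => ?_
      have hi := i.isLt; have hj := j.isLt
      rw [if_neg (by omega), if_neg (by omega), add_zero]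
  have hK2 : (∑ x : Fin (q+1), ∑ y : Fin q,
        if (x:ℕ) + (p + 1 + (y:ℕ)) + s + 1 = 2 * (p + q + 1) then (K2 (y, b) (x, a)).coeff 1 else 0)
      + (∑ x : Fin (q+1), ∑ y : Fin q,
        if (x:ℕ) + (p + 1 + (y:ℕ)) + s + 2 = 2 * (p + q + 1) then (K2 (y, b) (x, a)).coeff 0 else 0)
      = 0 := by
    rw [← Finset.sum_add_distrib]
    simp only [← Finset.sum_add_distrib]
    rw [Finset.sum_comm]
    refine Finset.sum_eq_zero fun j _ => ?_
    by_cases hc : p + q ≤ s + (j:ℕ) + 1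
    · refine Eq.trans (Finset.sum_congr rfl fun i _ => ?_)
        (wing_coeff K2 hK2pencil hK2wing j b a (s + (j:ℕ) + 1 - (p + q)))
      have hi := i.isLt; have hj := j.isLt
      congr 1
      · exact if_congr (by omega) rfl rfl
      · exact if_congr (by omega) rfl rfl
    · refine Finset.sum_eq_zero fun i _ => ?_
      have hi := i.isLt; have hj := j.isLt
      rw [if_neg (by omega), if_neg (by omega), add_zero]
  have hM : (∑ x : Fin (q+1), ∑ y : Fin (p+1),
        if (x:ℕ) + (y:ℕ) + s + 1 = 2 * (p + q + 1) then (M (x, a) (y, b)).coeff 1 else 0)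
      + (∑ x : Fin (q+1), ∑ y : Fin (p+1),
        if (x:ℕ) + (y:ℕ) + s + 2 = 2 * (p + q + 1) then (M (x, a) (y, b)).coeff 0 else 0)
      = if h : p + q ≤ s then A ⟨s - (p + q), by omega⟩ a b else 0 := by
    by_cases hps : p + q ≤ s
    · rw [dif_pos hps]
      have hA := hAS ⟨s - (p + q), by omega⟩ a b
      simp only [Fin.val_mk] at hA
      rw [← hA, ← Finset.sum_add_distrib]
      simp only [← Finset.sum_add_distrib]
      refine Finset.sum_congr rfl fun i _ => Finset.sum_congr rfl fun j _ => ?_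
      congr 1
      · exact if_congr (by omega) rfl rfl
      · exact if_congr (by omega) rfl rfl
    · rw [dif_neg hps]
      have z1 : (∑ x : Fin (q+1), ∑ y : Fin (p+1),
          if (x:ℕ) + (y:ℕ) + s + 1 = 2 * (p + q + 1) then (M (x, a) (y, b)).coeff 1 else 0) = 0 :=
        Finset.sum_eq_zero fun i _ => Finset.sum_eq_zero fun j _ => by
          have hi := i.isLt; have hj := j.isLt; exact if_neg (by omega)
      have z2 : (∑ x : Fin (q+1), ∑ y : Fin (p+1),
          if (x:ℕ) + (y:ℕ) + s + 2 = 2 * (p + q + 1) then (M (x, a) (y, b)).coeff 0 else 0) = 0 :=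
        Finset.sum_eq_zero fun i _ => Finset.sum_eq_zero fun j _ => by
          have hi := i.isLt; have hj := j.isLt; exact if_neg (by omega)
      rw [z1, z2, add_zero]
  simp only [Polynomial.coeff_zero, ite_self, Finset.sum_const_zero, add_zero, add_assoc] at hK2 hK1 hM ⊢
  linear_combination hM + hK1 + hK2
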